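/- Let α ∈ (0,1), c > 0, κ > 0 and suppose ∫_ℝ |K_α| < 1. Define K_α^{*1} := K_α and K_α^{*(j+1)} := K_α * K_α^{*j}, and set G(ξ) := K₀(ξ) + Σ_{j=1}^∞ (K₀ * K_α^{*j})(ξ). Then this series converges uniformly on ℝ, G is continuous and integrable on ℝ, and ∫_ℝ G(ξ) dξ = 1/κ². -/

import Mathlib

open Real MeasureTheory Filter Topology

/-- The kernel K₀(ξ) = e^{-κ|ξ|}/(2κ). -/
noncomputable def K0 (κ ξ : ℝ) : ℝ := Real.exp (-κ * |ξ|) / (2 * κ)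

/-- The (a.e.) derivative of K₀: K₀'(x) = -sign(x) e^{-κ|x|}/2. -/
noncomputable def K0d (κ x : ℝ) : ℝ := -Real.sign x * Real.exp (-κ * |x|) / 2

/-- The kernel K_α(ξ) = -(c^α/Γ(1-α)) ∫₀^∞ K₀'(ξ-s) s^{-α} ds. -/
noncomputable def Kalpha (α c κ ξ : ℝ) : ℝ :=
  -(c ^ α / Real.Gamma (1 - α)) * ∫ s in Set.Ioi (0 : ℝ), K0d κ (ξ - s) / s ^ α

/-- Convolution (K * g)(ξ) = ∫ K(ξ-y) g(y) dy. -/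
noncomputable def conv (K g : ℝ → ℝ) (ξ : ℝ) : ℝ := ∫ y, K (ξ - y) * g y

/-- The iterated convolutions of `K_α`: `Kiter α c κ n = K_α^{*(n+1)}`. -/
noncomputable def Kiter (α c κ : ℝ) : ℕ → ℝ → ℝ
  | 0 => Kalpha α c κ
  | n + 1 => conv (Kalpha α c κ) (Kiter α c κ n)

/-- The Green's function G(ξ) = K₀(ξ) + Σ_{j=1}^∞ (K₀ * K_α^{*j})(ξ). -/
noncomputable def Gker (α c κ : ℝ) (ξ : ℝ) : ℝ :=
  K0 κ ξ + ∑' j : ℕ, conv (K0 κ) (Kiter α c κ j) ξ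


open Set

lemma measurable_realSign : Measurable Real.sign := by
  unfold Real.sign
  exact Measurable.ite (measurableSet_lt measurable_id measurable_const) measurable_const
    (Measurable.ite (measurableSet_lt measurable_const measurable_id) measurable_const
      measurable_const)

lemma measurable_K0d (κ : ℝ) : Measurable (K0d κ) := by
  unfold K0d
  exact ((measurable_realSign.neg).mul
    ((measurable_const.mul measurable_abs).exp)).div measurable_const

lemma abs_K0d_le (κ x : ℝ) : |K0d κ x| ≤ Real.exp (-κ * |x|) / 2 := by
  unfold K0d
  rw [abs_div, abs_mul, abs_neg]
  have h1 : |Real.sign x| ≤ 1 := by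
    rcases Real.sign_apply_eq x with h | h | h <;> rw [h] <;> norm_num
  have h2 : |Real.exp (-κ * |x|)| = Real.exp (-κ * |x|) := abs_of_pos (Real.exp_pos _)
  rw [h2, abs_two]
  have := Real.exp_pos (-κ * |x|)
  nlinarith
lemma abs_K0d_le' {κ : ℝ} (hκ : 0 ≤ κ) (x : ℝ) : |K0d κ x| ≤ 1 / 2 := by
  refine (abs_K0d_le κ x).trans ?_
  have h1 : Real.exp (-κ * |x|) ≤ 1 := Real.exp_le_one_iff.mpr (by nlinarith [abs_nonneg x])
  linarith

lemma continuous_K0 (κ : ℝ) : Continuous (K0 κ) :=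
  ((Real.continuous_exp.comp (continuous_const.mul continuous_abs)).div_const _)

lemma K0_nonneg {κ : ℝ} (hκ : 0 < κ) (ξ : ℝ) : 0 ≤ K0 κ ξ :=
  div_nonneg (Real.exp_pos _).le (by linarith)

lemma K0_le {κ : ℝ} (hκ : 0 < κ) (ξ : ℝ) : K0 κ ξ ≤ 1 / (2 * κ) := by
  unfold K0
  have h1 : Real.exp (-κ * |ξ|) ≤ 1 := Real.exp_le_one_iff.mpr (by nlinarith [abs_nonneg ξ])
  have h2 : (0:ℝ) < 2 * κ := by linarith
  exact (div_le_div_iff_of_pos_right h2).mpr h1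

lemma hasDerivAt_K0 {κ x : ℝ} (hκ : 0 < κ) (hx : x ≠ 0) :
    HasDerivAt (K0 κ) (K0d κ x) x := by
  rcases hx.lt_or_gt with h | h
  · have hd : HasDerivAt (fun y : ℝ => Real.exp (κ * y) / (2 * κ))
        (Real.exp (κ * x) * κ / (2 * κ)) x := by
      simpa using (((hasDerivAt_id x).const_mul κ).exp).div_const (2 * κ)
    have heq : (fun y : ℝ => Real.exp (κ * y) / (2 * κ)) =ᶠ[nhds x] K0 κ := by
      filter_upwards [Iio_mem_nhds h] with y (hy : y < 0)
      unfold K0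
      rw [abs_of_neg hy]
      ring_nf
    have := hd.congr_of_eventuallyEq heq.symm
    refine this.congr_deriv ?_
    unfold K0d
    rw [Real.sign_of_neg h, abs_of_neg h]
    field_simp
  · have hd : HasDerivAt (fun y : ℝ => Real.exp (-κ * y) / (2 * κ))
        (Real.exp (-κ * x) * (-κ) / (2 * κ)) x := by
      simpa using (((hasDerivAt_id x).const_mul (-κ)).exp).div_const (2 * κ)
    have heq : (fun y : ℝ => Real.exp (-κ * y) / (2 * κ)) =ᶠ[nhds x] K0 κ := by
      filter_upwards [Ioi_mem_nhds h] with y (hy : 0 < y)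
      unfold K0
      rw [abs_of_pos hy]
    have := hd.congr_of_eventuallyEq heq.symm
    refine this.congr_deriv ?_
    unfold K0d
    rw [Real.sign_of_pos h, abs_of_pos h]
    field_simp

lemma intervalIntegrable_K0d {κ : ℝ} (hκ : 0 < κ) (a b : ℝ) :
    IntervalIntegrable (K0d κ) volume a b := by
  rw [intervalIntegrable_iff]
  refine Integrable.mono' (g := fun _ => 1 / 2) ?_ ?_ ?_
  · exact Iff.mpr integrableOn_const_iff (Or.inr measure_Ioc_lt_top)
  · exact (measurable_K0d κ).aestronglyMeasurable
  · exact Eventually.of_forall fun x => by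
      simpa [Real.norm_eq_abs] using abs_K0d_le' hκ.le x

lemma integral_K0d {κ : ℝ} (hκ : 0 < κ) (p q : ℝ) :
    ∫ u in p..q, K0d κ u = K0 κ q - K0 κ p := by
  have base : ∀ q : ℝ, ∫ u in (0:ℝ)..q, K0d κ u = K0 κ q - K0 κ 0 := by
    intro q
    rcases le_or_gt 0 q with h | h
    · refine intervalIntegral.integral_eq_sub_of_hasDerivAt_of_le h
        ((continuous_K0 κ).continuousOn) (fun x hx => hasDerivAt_K0 hκ (ne_of_gt hx.1))
        (intervalIntegrable_K0d hκ 0 q)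
    · rw [intervalIntegral.integral_symm]
      rw [intervalIntegral.integral_eq_sub_of_hasDerivAt_of_le h.le
        ((continuous_K0 κ).continuousOn) (fun x hx => hasDerivAt_K0 hκ (ne_of_lt hx.2))
        (intervalIntegrable_K0d hκ q 0)]
      ring
  have hpq : ∫ u in p..q, K0d κ u
      = (∫ u in (0:ℝ)..q, K0d κ u) - ∫ u in (0:ℝ)..p, K0d κ u := by
    rw [← intervalIntegral.integral_add_adjacent_intervals
      (intervalIntegrable_K0d hκ p 0) (intervalIntegrable_K0d hκ 0 q),
      intervalIntegral.integral_symm]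
    ring
  rw [hpq, base, base]
  ring

lemma integrableOn_K0_Ioi {κ : ℝ} (hκ : 0 < κ) : IntegrableOn (K0 κ) (Ioi 0) := by
  have h : IntegrableOn (fun x : ℝ => Real.exp (-κ * x) / (2 * κ)) (Ioi 0) :=
    (exp_neg_integrableOn_Ioi 0 hκ).div_const (2 * κ)
  refine h.congr_fun (fun x hx => ?_) measurableSet_Ioi
  unfold K0
  rw [abs_of_pos hx]

lemma integrable_K0 {κ : ℝ} (hκ : 0 < κ) : Integrable (K0 κ) := by
  have int_Iic : IntegrableOn (K0 κ) (Iic 0) := by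
    rw [← Measure.map_neg_eq_self (volume : Measure ℝ)]
    have m : MeasurableEmbedding fun x : ℝ => -x := (Homeomorph.neg ℝ).measurableEmbedding
    rw [m.integrableOn_map_iff]
    simp_rw [Function.comp_def, neg_preimage, neg_Iic, neg_zero]
    have : IntegrableOn (fun x => K0 κ (-x)) (Ioi 0) := by
      refine (integrableOn_K0_Ioi hκ).congr_fun (fun x _ => ?_) measurableSet_Ioi
      unfold K0; rw [abs_neg]
    exact Iff.mpr integrableOn_Ici_iff_integrableOn_Ioi this
  have := int_Iic.union (integrableOn_K0_Ioi hκ)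
  rwa [Iic_union_Ioi, integrableOn_univ] at this

lemma integral_exp_neg_mul_Ioi {κ : ℝ} (hκ : 0 < κ) :
    ∫ x in Ioi (0:ℝ), Real.exp (-κ * x) = 1 / κ := by
  have h := integral_comp_mul_left_Ioi (fun u => Real.exp (-u)) 0 hκ
  simp only [mul_zero] at h
  rw [show (fun x => Real.exp (-κ * x)) = (fun x => Real.exp (-(κ * x))) by
    funext x; ring_nf]
  rw [h, integral_exp_neg_Ioi_zero]
  simp [abs_of_pos (inv_pos.mpr hκ), smul_eq_mul]

lemma integral_K0 {κ : ℝ} (hκ : 0 < κ) : ∫ ξ, K0 κ ξ = 1 / κ ^ 2 := by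
  have h : ∫ ξ, K0 κ ξ = 2 * ∫ x in Ioi (0:ℝ), Real.exp (-κ * x) / (2 * κ) := by
    exact integral_comp_abs (f := fun u => Real.exp (-κ * u) / (2 * κ))
  rw [h, integral_div, integral_exp_neg_mul_Ioi hκ]
  field_simp

lemma integral_exp_neg_abs {κ : ℝ} (hκ : 0 < κ) :
    ∫ ξ : ℝ, Real.exp (-κ * |ξ|) = 2 / κ := by
  have : ∀ ξ : ℝ, Real.exp (-κ * |ξ|) = (2 * κ) * K0 κ ξ := by
    intro ξ; unfold K0; field_simp
  simp_rw [this]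
  rw [integral_const_mul, integral_K0 hκ]
  field_simp

lemma integrable_exp_neg_abs {κ : ℝ} (hκ : 0 < κ) :
    Integrable (fun ξ : ℝ => Real.exp (-κ * |ξ|)) := by
  have : ∀ ξ : ℝ, Real.exp (-κ * |ξ|) = (2 * κ) * K0 κ ξ := by
    intro ξ; unfold K0; field_simp
  simp_rw [this]
  exact (integrable_K0 hκ).const_mul _

-- rpow facts
lemma integral_Ioi_neg_rpow {α : ℝ} (hα : 0 < α) {s : ℝ} (hs : 0 < s) :
    ∫ t in Ioi s, t ^ (-1 - α) = s ^ (-α) / α := by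
  rw [integral_Ioi_rpow_of_lt (by linarith) hs]
  have : -1 - α + 1 = -α := by ring
  rw [this]
  field_simp

lemma integrableOn_Ioi_neg_rpow {α : ℝ} (hα : 0 < α) {s : ℝ} (hs : 0 < s) :
    IntegrableOn (fun t : ℝ => t ^ (-1 - α)) (Ioi s) :=
  integrableOn_Ioi_rpow_of_lt (by linarith) hs

lemma integrableOn_exp_mul_rpow {α κ : ℝ} (hα0 : -1 < -α) (hκ : 0 < κ) :
    IntegrableOn (fun s : ℝ => Real.exp (-κ * s) * s ^ (-α)) (Ioi 0) := by
  have h := integrableOn_rpow_mul_exp_neg_mul_rpow (p := 1) (s := -α) (b := κ) hα0 one_pos hκ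
  refine h.congr_fun (fun x hx => ?_) measurableSet_Ioi
  simp only [Real.rpow_one]
  ring

/-- The auxiliary kernel `J`. -/
noncomputable def Jker (α κ ξ : ℝ) : ℝ :=
  ∫ t in Ioi (0:ℝ), (K0 κ ξ - K0 κ (ξ - t)) * t ^ (-1 - α)

lemma K0_sub_K0_eq {κ : ℝ} (hκ : 0 < κ) (ξ t : ℝ) :
    K0 κ ξ - K0 κ (ξ - t) = ∫ u in (ξ - t)..ξ, K0d κ u :=
  (integral_K0d hκ (ξ - t) ξ).symm

lemma abs_K0_sub_K0_le {κ : ℝ} (hκ : 0 < κ) (ξ : ℝ) {t : ℝ} (ht : 0 < t) :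
    |K0 κ ξ - K0 κ (ξ - t)| ≤ Real.exp (κ * t) * Real.exp (-κ * |ξ|) / 2 * t := by
  rw [K0_sub_K0_eq hκ ξ t]
  have hle : ξ - t ≤ ξ := by linarith
  have h := intervalIntegral.norm_integral_le_of_norm_le_const
    (C := Real.exp (κ * t) * Real.exp (-κ * |ξ|) / 2) (f := K0d κ)
    (a := ξ - t) (b := ξ) ?_
  · rw [Real.norm_eq_abs] at h
    calc |∫ u in (ξ - t)..ξ, K0d κ u| ≤ _ * |ξ - (ξ - t)| := h
    _ = Real.exp (κ * t) * Real.exp (-κ * |ξ|) / 2 * t := by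
        rw [show ξ - (ξ - t) = t by ring, abs_of_pos ht]
  · intro x hx
    rw [Set.uIoc_of_le hle] at hx
    have h1 : |ξ| ≤ |x| + t := by
      have := abs_sub_abs_le_abs_sub ξ x
      have h2 : |ξ - x| ≤ t := by
        rw [abs_of_nonneg (by linarith [hx.2])]
        linarith [hx.1]
      linarith
    rw [Real.norm_eq_abs]
    refine (abs_K0d_le κ x).trans ?_
    have : -κ * |x| ≤ κ * t + -κ * |ξ| := by nlinarith
    calc Real.exp (-κ * |x|) / 2 ≤ Real.exp (κ * t + -κ * |ξ|) / 2 := by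
          gcongr <;> norm_num
    _ = Real.exp (κ * t) * Real.exp (-κ * |ξ|) / 2 := by rw [Real.exp_add]

lemma Kalpha_repr {α κ : ℝ} (hα0 : 0 < α) (hα1 : α < 1) (hκ : 0 < κ) (ξ : ℝ) :
    ∫ s in Ioi (0:ℝ), K0d κ (ξ - s) / s ^ α = α * Jker α κ ξ := by
  classical
  set F : ℝ × ℝ → ℝ :=
    fun p => if 0 < p.1 ∧ p.1 < p.2 then K0d κ (ξ - p.1) * p.2 ^ (-1 - α) else 0 with hF
  have hFmeas : Measurable F := by
    refine Measurable.ite ?_ ?_ measurable_const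
    · exact (measurableSet_lt measurable_const measurable_fst).inter
        (measurableSet_lt measurable_fst measurable_snd)
    · exact ((measurable_K0d κ).comp (measurable_const.sub measurable_fst)).mul
        (by fun_prop)
  -- slices in t
  have hslice : ∀ s : ℝ, Integrable (fun t => F (s, t)) := by
    intro s
    by_cases hs : 0 < s
    · have heq : (fun t => F (s, t))
          = Set.indicator (Ioi s) (fun t => K0d κ (ξ - s) * t ^ (-1 - α)) := by
        funext t
        simp only [hF, Set.indicator_apply, mem_Ioi]
        by_cases h : s < t <;> simp [h, hs]
      rw [heq, integrable_indicator_iff measurableSet_Ioi]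
      exact (integrableOn_Ioi_neg_rpow hα0 hs).const_mul _
    · have heq : (fun t => F (s, t)) = fun _ => (0:ℝ) := by
        funext t; simp [hF, hs]
      rw [heq]; exact integrable_zero _ _ _
  -- value of ∫ t, ‖F (s,t)‖
  have hnormval : ∀ s : ℝ, 0 < s →
      (∫ t, ‖F (s, t)‖) = |K0d κ (ξ - s)| * (s ^ (-α) / α) := by
    intro s hs
    have heq : (fun t => ‖F (s, t)‖)
        = Set.indicator (Ioi s) (fun t => |K0d κ (ξ - s)| * t ^ (-1 - α)) := by
      funext t
      simp only [hF, Set.indicator_apply, mem_Ioi, Real.norm_eq_abs]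
      by_cases h : s < t
      · simp only [h, hs, and_self, if_true, if_pos, abs_mul]
        rw [abs_of_nonneg (Real.rpow_nonneg (le_of_lt (hs.trans h)) _)]
      · simp [h]
    rw [heq, integral_indicator measurableSet_Ioi, integral_const_mul,
      integral_Ioi_neg_rpow hα0 hs]
  have hnormzero : ∀ s : ℝ, ¬ 0 < s → (∫ t, ‖F (s, t)‖) = 0 := by
    intro s hs
    have heq : (fun t => ‖F (s, t)‖) = fun _ => (0:ℝ) := by
      funext t; simp [hF, hs]
    rw [heq, integral_zero]
  -- integrability of s ↦ ∫ t, ‖F (s,t)‖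
  have hBint : Integrable
      (Set.indicator (Ioi (0:ℝ))
        (fun s => Real.exp (κ * |ξ|) / 2 * (Real.exp (-κ * s) * s ^ (-α)) / α)) := by
    rw [integrable_indicator_iff measurableSet_Ioi]
    exact ((integrableOn_exp_mul_rpow (by linarith : (-1:ℝ) < -α) hκ).const_mul _).div_const _
  have hFnormint : Integrable (fun s => ∫ t, ‖F (s, t)‖) := by
    refine Integrable.mono' hBint
      (hFmeas.aestronglyMeasurable.norm.integral_prod_right') (ae_of_all _ fun s => ?_)
    rw [Real.norm_eq_abs, abs_of_nonneg (integral_nonneg fun t => norm_nonneg _)]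
    by_cases hs : 0 < s
    · rw [hnormval s hs, Set.indicator_of_mem (mem_Ioi.mpr hs)]
      have h1 : |K0d κ (ξ - s)| ≤ Real.exp (κ * |ξ|) / 2 * Real.exp (-κ * s) := by
        refine (abs_K0d_le κ _).trans ?_
        have habs : s - |ξ| ≤ |ξ - s| := by
          have := abs_sub_abs_le_abs_sub s ξ
          rw [abs_sub_comm s ξ] at this
          rw [abs_of_pos hs] at this
          linarith
        have : -κ * |ξ - s| ≤ κ * |ξ| + -κ * s := by nlinarith
        calc Real.exp (-κ * |ξ - s|) / 2 ≤ Real.exp (κ * |ξ| + -κ * s) / 2 := by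
              gcongr <;> norm_num
        _ = Real.exp (κ * |ξ|) / 2 * Real.exp (-κ * s) := by
              rw [Real.exp_add]; ring
      have h2 : (0:ℝ) ≤ s ^ (-α) / α :=
        div_nonneg (Real.rpow_nonneg hs.le _) hα0.le
      calc |K0d κ (ξ - s)| * (s ^ (-α) / α)
          ≤ (Real.exp (κ * |ξ|) / 2 * Real.exp (-κ * s)) * (s ^ (-α) / α) := by
            exact mul_le_mul_of_nonneg_right h1 h2
      _ = Real.exp (κ * |ξ|) / 2 * (Real.exp (-κ * s) * s ^ (-α)) / α := by ring
    · rw [hnormzero s hs, Set.indicator_of_notMem (by simpa using hs)]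
  have hFint : Integrable F ((volume : Measure ℝ).prod volume) :=
    (integrable_prod_iff hFmeas.aestronglyMeasurable).mpr
      ⟨ae_of_all _ hslice, hFnormint⟩
  have hFint' : Integrable (Function.uncurry fun s t => F (s, t))
      ((volume : Measure ℝ).prod volume) := by
    have : (Function.uncurry fun s t => F (s, t)) = F := by
      funext p; cases p; rfl
    rwa [this]
  have hswap := integral_integral_swap hFint'
  -- LHS : ∫ s, ∫ t, F (s,t)
  have hLs : ∀ s : ℝ, (∫ t, F (s, t))
      = Set.indicator (Ioi (0:ℝ)) (fun s => K0d κ (ξ - s) * (s ^ (-α) / α)) s := by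
    intro s
    by_cases hs : 0 < s
    · have heq : (fun t => F (s, t))
          = Set.indicator (Ioi s) (fun t => K0d κ (ξ - s) * t ^ (-1 - α)) := by
        funext t
        simp only [hF, Set.indicator_apply, mem_Ioi]
        by_cases h : s < t <;> simp [h, hs]
      rw [heq, integral_indicator measurableSet_Ioi, integral_const_mul,
        integral_Ioi_neg_rpow hα0 hs, Set.indicator_of_mem (mem_Ioi.mpr hs)]
    · have heq : (fun t => F (s, t)) = fun _ => (0:ℝ) := by
        funext t; simp [hF, hs]
      rw [heq, integral_zero, Set.indicator_of_notMem (by simpa using hs)]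
  have hLHS : (∫ s, ∫ t, F (s, t))
      = ∫ s in Ioi (0:ℝ), K0d κ (ξ - s) * (s ^ (-α) / α) := by
    rw [show (fun s => ∫ t, F (s, t))
        = Set.indicator (Ioi (0:ℝ)) (fun s => K0d κ (ξ - s) * (s ^ (-α) / α))
      from funext hLs]
    exact integral_indicator measurableSet_Ioi
  -- RHS : ∫ t, ∫ s, F (s,t)
  have hRs : ∀ t : ℝ, (∫ s, F (s, t))
      = Set.indicator (Ioi (0:ℝ))
        (fun t => (K0 κ ξ - K0 κ (ξ - t)) * t ^ (-1 - α)) t := by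
    intro t
    by_cases ht : 0 < t
    · have heq : (fun s => F (s, t))
          = Set.indicator (Ioo (0:ℝ) t) (fun s => K0d κ (ξ - s) * t ^ (-1 - α)) := by
        funext s
        simp only [hF, Set.indicator_apply, mem_Ioo]
      rw [heq, integral_indicator measurableSet_Ioo, Set.indicator_of_mem (mem_Ioi.mpr ht)]
      rw [integral_mul_const]
      congr 1
      have h1 : ∫ s in Ioo (0:ℝ) t, K0d κ (ξ - s) = ∫ s in (0:ℝ)..t, K0d κ (ξ - s) := by
        rw [intervalIntegral.integral_of_le ht.le, integral_Ioc_eq_integral_Ioo]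
      rw [h1, intervalIntegral.integral_comp_sub_left (K0d κ) ξ, sub_zero,
        integral_K0d hκ]
    · have heq : (fun s => F (s, t)) = fun _ => (0:ℝ) := by
        funext s
        simp only [hF]
        exact if_neg (by rintro ⟨h1, h2⟩; exact ht (h1.trans h2))
      rw [heq, integral_zero, Set.indicator_of_notMem (by simpa using ht)]
  have hRHS : (∫ t, ∫ s, F (s, t)) = Jker α κ ξ := by
    rw [show (fun t => ∫ s, F (s, t))
        = Set.indicator (Ioi (0:ℝ)) (fun t => (K0 κ ξ - K0 κ (ξ - t)) * t ^ (-1 - α))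
      from funext hRs]
    exact integral_indicator measurableSet_Ioi
  -- combine
  have hmain : ∫ s in Ioi (0:ℝ), K0d κ (ξ - s) * (s ^ (-α) / α) = Jker α κ ξ := by
    rw [← hLHS, ← hRHS]; exact hswap
  have hcongr : ∫ s in Ioi (0:ℝ), K0d κ (ξ - s) * (s ^ (-α) / α)
      = (∫ s in Ioi (0:ℝ), K0d κ (ξ - s) / s ^ α) / α := by
    rw [← integral_div]
    refine setIntegral_congr_fun measurableSet_Ioi (fun s hs => ?_)
    have hs' : (0:ℝ) < s := hs
    rw [Real.rpow_neg hs'.le]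
    field_simp
  rw [hcongr] at hmain
  field_simp at hmain ⊢
  linarith [hmain]

section Hprod

variable {α κ : ℝ}

/-- The product-integrand for the `J` kernel. -/
noncomputable def Hker (α κ : ℝ) : ℝ × ℝ → ℝ := fun p =>
  if 0 < p.1 then (K0 κ p.2 - K0 κ (p.2 - p.1)) * p.1 ^ (-1 - α) else 0

lemma measurable_Hker : Measurable (Hker α κ) := by
  refine Measurable.ite (measurableSet_lt measurable_const measurable_fst) ?_ measurable_const
  exact (((continuous_K0 κ).measurable.comp measurable_snd).sub
    ((continuous_K0 κ).measurable.comp (measurable_snd.sub measurable_fst))).mul (by fun_prop)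

lemma Hker_slice (hκ : 0 < κ) (t : ℝ) : Integrable (fun ξ => Hker α κ (t, ξ)) := by
  by_cases ht : 0 < t
  · have heq : (fun ξ => Hker α κ (t, ξ))
        = fun ξ => (K0 κ ξ - K0 κ (ξ - t)) * t ^ (-1 - α) := by
      funext ξ; simp [Hker, ht]
    rw [heq]
    exact ((integrable_K0 hκ).sub ((integrable_K0 hκ).comp_sub_right t)).mul_const _
  · have heq : (fun ξ => Hker α κ (t, ξ)) = fun _ => (0:ℝ) := by
      funext ξ; simp [Hker, ht]
    rw [heq]; exact integrable_zero _ _ _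

lemma integrable_Hker (hα0 : 0 < α) (hα1 : α < 1) (hκ : 0 < κ) :
    Integrable (Hker α κ) ((volume : Measure ℝ).prod volume) := by
  refine (integrable_prod_iff measurable_Hker.aestronglyMeasurable).mpr
    ⟨ae_of_all _ (Hker_slice hκ), ?_⟩
  set B : ℝ → ℝ := fun t =>
    Set.indicator (Ioc (0:ℝ) 1) (fun t => Real.exp κ / κ * t ^ (-α)) t
    + Set.indicator (Ioi (1:ℝ)) (fun t => 2 / κ ^ 2 * t ^ (-1 - α)) t with hB
  have hBint : Integrable B := by
    refine Integrable.add ?_ ?_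
    · rw [integrable_indicator_iff measurableSet_Ioc]
      have h := intervalIntegral.intervalIntegrable_rpow' (a := 0) (b := 1) (r := -α) (by linarith)
      rw [intervalIntegrable_iff, Set.uIoc_of_le (by norm_num : (0:ℝ) ≤ 1)] at h
      exact h.const_mul _
    · rw [integrable_indicator_iff measurableSet_Ioi]
      exact (integrableOn_Ioi_neg_rpow hα0 one_pos).const_mul _
  refine Integrable.mono' hBint
    (measurable_Hker.aestronglyMeasurable.norm.integral_prod_right')
    (ae_of_all _ fun t => ?_)
  rw [Real.norm_eq_abs, abs_of_nonneg (integral_nonneg fun ξ => norm_nonneg _)]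
  by_cases ht : 0 < t
  · have hval : (fun ξ => ‖Hker α κ (t, ξ)‖)
        = fun ξ => |K0 κ ξ - K0 κ (ξ - t)| * t ^ (-1 - α) := by
      funext ξ
      simp only [Hker, ht, if_true, Real.norm_eq_abs, abs_mul]
      rw [abs_of_nonneg (Real.rpow_nonneg ht.le _)]
    rw [hval]
    have hint1 : Integrable (fun ξ => |K0 κ ξ - K0 κ (ξ - t)| * t ^ (-1 - α)) :=
      (((integrable_K0 hκ).sub ((integrable_K0 hκ).comp_sub_right t)).abs).mul_const _
    rcases le_or_gt t 1 with ht1 | ht1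
    · -- small t
      have hmono : ∀ ξ : ℝ, |K0 κ ξ - K0 κ (ξ - t)| * t ^ (-1 - α)
          ≤ (Real.exp (κ * t) * t * t ^ (-1 - α) / 2) * Real.exp (-κ * |ξ|) := by
        intro ξ
        have h1 := abs_K0_sub_K0_le hκ ξ ht
        have h2 : (0:ℝ) ≤ t ^ (-1 - α) := Real.rpow_nonneg ht.le _
        calc |K0 κ ξ - K0 κ (ξ - t)| * t ^ (-1 - α)
            ≤ (Real.exp (κ * t) * Real.exp (-κ * |ξ|) / 2 * t) * t ^ (-1 - α) :=
              mul_le_mul_of_nonneg_right h1 h2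
        _ = (Real.exp (κ * t) * t * t ^ (-1 - α) / 2) * Real.exp (-κ * |ξ|) := by ring
      have hle : (∫ ξ, |K0 κ ξ - K0 κ (ξ - t)| * t ^ (-1 - α))
          ≤ ∫ ξ, (Real.exp (κ * t) * t * t ^ (-1 - α) / 2) * Real.exp (-κ * |ξ|) :=
        integral_mono hint1 ((integrable_exp_neg_abs hκ).const_mul _) hmono
      rw [integral_const_mul, integral_exp_neg_abs hκ] at hle
      refine hle.trans ?_
      have htt : t * t ^ (-1 - α) = t ^ (-α) := by
        nth_rewrite 1 [← Real.rpow_one t]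
        rw [← Real.rpow_add ht, show (1:ℝ) + (-1 - α) = -α by ring]
      have hexp : Real.exp (κ * t) ≤ Real.exp κ := by
        rw [Real.exp_le_exp]
        nlinarith
      have hBval : B t = Real.exp κ / κ * t ^ (-α) := by
        rw [hB]
        simp only
        rw [Set.indicator_of_mem (by exact ⟨ht, ht1⟩ : t ∈ Ioc (0:ℝ) 1),
          Set.indicator_of_notMem (by simpa using ht1), add_zero]
      rw [hBval]
      have h2 : (0:ℝ) ≤ t ^ (-α) := Real.rpow_nonneg ht.le _
      have hκ2 : (0:ℝ) < κ := hκ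
      calc Real.exp (κ * t) * t * t ^ (-1 - α) / 2 * (2 / κ)
          = Real.exp (κ * t) * (t * t ^ (-1 - α)) / κ := by field_simp
      _ = Real.exp (κ * t) * t ^ (-α) / κ := by rw [htt]
      _ ≤ Real.exp κ * t ^ (-α) / κ := by gcongr
      _ = Real.exp κ / κ * t ^ (-α) := by ring
    · -- large t
      have hmono : ∀ ξ : ℝ, |K0 κ ξ - K0 κ (ξ - t)| * t ^ (-1 - α)
          ≤ (K0 κ ξ + K0 κ (ξ - t)) * t ^ (-1 - α) := by
        intro ξ
        have h2 : (0:ℝ) ≤ t ^ (-1 - α) := Real.rpow_nonneg ht.le _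
        refine mul_le_mul_of_nonneg_right ?_ h2
        refine (abs_sub (K0 κ ξ) (K0 κ (ξ - t))).trans ?_
        rw [abs_of_nonneg (K0_nonneg hκ _), abs_of_nonneg (K0_nonneg hκ _)]
      have hint2 : Integrable (fun ξ => (K0 κ ξ + K0 κ (ξ - t)) * t ^ (-1 - α)) :=
        ((integrable_K0 hκ).add ((integrable_K0 hκ).comp_sub_right t)).mul_const _
      have hle := integral_mono hint1 hint2 hmono
      refine hle.trans ?_
      rw [integral_mul_const, integral_add (integrable_K0 hκ)
        ((integrable_K0 hκ).comp_sub_right t), integral_sub_right_eq_self (K0 κ) t,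
        integral_K0 hκ]
      have hBval : B t = 2 / κ ^ 2 * t ^ (-1 - α) := by
        rw [hB]
        simp only
        rw [Set.indicator_of_notMem (by simp [ht1.not_ge] : t ∉ Ioc (0:ℝ) 1),
          Set.indicator_of_mem (mem_Ioi.mpr ht1), zero_add]
      rw [hBval]
      ring_nf
      exact le_refl _
  · have hval : (fun ξ => ‖Hker α κ (t, ξ)‖) = fun _ => (0:ℝ) := by
      funext ξ; simp [Hker, ht]
    rw [hval, integral_zero]
    have h1 : B t = 0 := by
      rw [hB]
      simp only
      rw [Set.indicator_of_notMem, Set.indicator_of_notMem, add_zero]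
      · simp only [mem_Ioi]; intro h; exact ht (lt_trans one_pos h)
      · simp only [mem_Ioc]; rintro ⟨h1, -⟩; exact ht h1
    rw [h1]

lemma Jker_eq_integral_Hker (ξ : ℝ) : Jker α κ ξ = ∫ t, Hker α κ (t, ξ) := by
  have heq : (fun t => Hker α κ (t, ξ))
      = Set.indicator (Ioi (0:ℝ)) (fun t => (K0 κ ξ - K0 κ (ξ - t)) * t ^ (-1 - α)) := by
    funext t
    simp only [Hker, Set.indicator_apply, mem_Ioi]
  rw [heq, integral_indicator measurableSet_Ioi]
  rfl

lemma integrable_Jker (hα0 : 0 < α) (hα1 : α < 1) (hκ : 0 < κ) :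
    Integrable (Jker α κ) := by
  have h := (integrable_Hker hα0 hα1 hκ).integral_prod_right
  refine h.congr (ae_of_all _ fun ξ => ?_)
  exact (Jker_eq_integral_Hker ξ).symm

lemma integral_Jker (hα0 : 0 < α) (hα1 : α < 1) (hκ : 0 < κ) :
    ∫ ξ, Jker α κ ξ = 0 := by
  have hswap := integral_integral_swap (f := fun t ξ => Hker α κ (t, ξ))
    (by
      have : (Function.uncurry fun t ξ => Hker α κ (t, ξ)) = Hker α κ := by
        funext p; cases p; rfl
      rw [this]; exact integrable_Hker hα0 hα1 hκ)
  have h1 : ∫ ξ, Jker α κ ξ = ∫ ξ, ∫ t, Hker α κ (t, ξ) := by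
    congr 1; funext ξ; exact Jker_eq_integral_Hker ξ
  rw [h1, ← hswap]
  have h2 : ∀ t : ℝ, (∫ ξ, Hker α κ (t, ξ)) = 0 := by
    intro t
    by_cases ht : 0 < t
    · have heq : (fun ξ => Hker α κ (t, ξ))
          = fun ξ => (K0 κ ξ - K0 κ (ξ - t)) * t ^ (-1 - α) := by
        funext ξ; simp [Hker, ht]
      rw [heq, integral_mul_const, integral_sub (integrable_K0 hκ)
        ((integrable_K0 hκ).comp_sub_right t), integral_sub_right_eq_self (K0 κ) t]
      simp
    · have heq : (fun ξ => Hker α κ (t, ξ)) = fun _ => (0:ℝ) := by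
        funext ξ; simp [Hker, ht]
      rw [heq, integral_zero]
  simp_rw [h2]
  exact integral_zero _ _

end Hprod


lemma Kalpha_eq {α c κ : ℝ} (hα0 : 0 < α) (hα1 : α < 1) (hκ : 0 < κ) :
    Kalpha α c κ = fun ξ => (-(c ^ α / Real.Gamma (1 - α)) * α) * Jker α κ ξ := by
  funext ξ
  unfold Kalpha
  rw [Kalpha_repr hα0 hα1 hκ ξ]
  ring

lemma integrable_Kalpha {α c κ : ℝ} (hα0 : 0 < α) (hα1 : α < 1) (hc : 0 < c) (hκ : 0 < κ) :
    Integrable (Kalpha α c κ) := by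
  rw [Kalpha_eq hα0 hα1 hκ]
  exact (integrable_Jker hα0 hα1 hκ).const_mul _

lemma integral_Kalpha {α c κ : ℝ} (hα0 : 0 < α) (hα1 : α < 1) (hc : 0 < c) (hκ : 0 < κ) :
    ∫ ξ, Kalpha α c κ ξ = 0 := by
  rw [Kalpha_eq hα0 hα1 hκ, integral_const_mul, integral_Jker hα0 hα1 hκ, mul_zero]


section Conv

lemma conv_eq (f g : ℝ → ℝ) :
    conv f g = MeasureTheory.convolution f g (ContinuousLinearMap.mul ℝ ℝ) volume := by
  funext x
  rw [convolution_mul_swap]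
  rfl

lemma integrable_conv {f g : ℝ → ℝ} (hf : Integrable f) (hg : Integrable g) :
    Integrable (conv f g) := by
  rw [conv_eq]
  exact hf.integrable_convolution (ContinuousLinearMap.mul ℝ ℝ) hg

lemma integral_conv {f g : ℝ → ℝ} (hf : Integrable f) (hg : Integrable g) :
    ∫ x, conv f g x = (∫ x, f x) * ∫ x, g x := by
  rw [conv_eq]
  simpa [ContinuousLinearMap.mul_apply'] using
    integral_convolution (ContinuousLinearMap.mul ℝ ℝ) hf hg

lemma continuous_conv_K0 {κ : ℝ} (hκ : 0 < κ) {g : ℝ → ℝ} (hg : Integrable g) :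
    Continuous (conv (K0 κ) g) := by
  rw [conv_eq]
  refine BddAbove.continuous_convolution_left_of_integrable _ ⟨1 / (2 * κ), ?_⟩
    (continuous_K0 κ) hg
  rintro y ⟨x, rfl⟩
  simpa [Real.norm_eq_abs, abs_of_nonneg (K0_nonneg hκ x)] using K0_le hκ x

lemma abs_conv_K0_le {κ : ℝ} (hκ : 0 < κ) {g : ℝ → ℝ} (hg : Integrable g) (ξ : ℝ) :
    |conv (K0 κ) g ξ| ≤ 1 / (2 * κ) * ∫ y, |g y| := by
  have h1 : |∫ y, K0 κ (ξ - y) * g y| ≤ ∫ y, |K0 κ (ξ - y)| * |g y| := by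
    simpa [Real.norm_eq_abs] using
      norm_integral_le_integral_norm (fun y => K0 κ (ξ - y) * g y) (μ := volume)
  refine h1.trans ?_
  have h2 : Integrable (fun y => K0 κ (ξ - y) * g y) := by
    refine Integrable.bdd_mul hg
      (((continuous_K0 κ).comp (continuous_const.sub continuous_id)).aestronglyMeasurable)
      (c := 1 / (2 * κ)) (ae_of_all _ fun y => ?_)
    simpa [Real.norm_eq_abs, abs_of_nonneg (K0_nonneg hκ _)] using K0_le hκ (ξ - y)
  have h2' : Integrable (fun y => |K0 κ (ξ - y)| * |g y|) :=
    h2.abs.congr (ae_of_all _ fun y => abs_mul _ _)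
  have h3 : ∀ y : ℝ, |K0 κ (ξ - y)| * |g y| ≤ 1 / (2 * κ) * |g y| := by
    intro y
    rw [abs_of_nonneg (K0_nonneg hκ _)]
    exact mul_le_mul_of_nonneg_right (K0_le hκ _) (abs_nonneg _)
  refine (integral_mono h2' (hg.abs.const_mul _) h3).trans_eq ?_
  rw [integral_const_mul]

lemma l1_conv_le {f g : ℝ → ℝ} (hf : Integrable f) (hg : Integrable g) :
    ∫ x, |conv f g x| ≤ (∫ x, |f x|) * ∫ x, |g x| := by
  have hpt : ∀ x, |conv f g x| ≤ conv (fun y => |f y|) (fun y => |g y|) x := by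
    intro x
    have h1 : |∫ y, f (x - y) * g y| ≤ ∫ y, |f (x - y)| * |g y| := by
      simpa [Real.norm_eq_abs] using
        norm_integral_le_integral_norm (fun y => f (x - y) * g y) (μ := volume)
    exact h1
  refine (integral_mono (integrable_conv hf hg).abs
    (integrable_conv hf.abs hg.abs) hpt).trans_eq ?_
  exact integral_conv hf.abs hg.abs

end Conv


/-- If `‖K_α‖_{L¹} < 1`, the series defining `G` converges uniformly on ℝ, `G` is
continuous and integrable, and `∫ G = 1/κ²`. -/
theorem Gker_properties (α c κ : ℝ) (hα : α ∈ Set.Ioo (0 : ℝ) 1) (hc : 0 < c) (hκ : 0 < κ)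
    (hK : (∫ ξ, |Kalpha α c κ ξ|) < 1) :
    TendstoUniformly
      (fun (N : ℕ) (ξ : ℝ) => K0 κ ξ + ∑ j ∈ Finset.range N, conv (K0 κ) (Kiter α c κ j) ξ)
      (Gker α c κ) atTop ∧
    Continuous (Gker α c κ) ∧ Integrable (Gker α c κ) ∧
    (∫ ξ, Gker α c κ ξ) = 1 / κ ^ 2 := by
  obtain ⟨hα0, hα1⟩ := hα
  set r : ℝ := ∫ ξ, |Kalpha α c κ ξ| with hr
  have hr0 : 0 ≤ r := integral_nonneg fun ξ => abs_nonneg _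
  have hKa : Integrable (Kalpha α c κ) := integrable_Kalpha hα0 hα1 hc hκ
  -- facts about Kiter
  have hKiter : ∀ n : ℕ, Integrable (Kiter α c κ n)
      ∧ (∫ ξ, |Kiter α c κ n ξ|) ≤ r ^ (n + 1) ∧ (∫ ξ, Kiter α c κ n ξ) = 0 := by
    intro n
    induction n with
    | zero =>
      have h0 : (∫ ξ, |Kiter α c κ 0 ξ|) = r := hr.symm
      exact ⟨hKa, by rw [zero_add, pow_one]; exact le_of_eq h0,
        integral_Kalpha hα0 hα1 hc hκ⟩
    | succ n ih =>
      obtain ⟨h1, h2, h3⟩ := ih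
      refine ⟨integrable_conv hKa h1, ?_, ?_⟩
      · refine (l1_conv_le hKa h1).trans ?_
        rw [pow_succ']
        exact mul_le_mul_of_nonneg_left h2 hr0
      · show (∫ ξ, conv (Kalpha α c κ) (Kiter α c κ n) ξ) = 0
        rw [integral_conv hKa h1, h3, mul_zero]
  -- facts about the summands
  set f : ℕ → ℝ → ℝ := fun j => conv (K0 κ) (Kiter α c κ j) with hf
  have hfint : ∀ j, Integrable (f j) := fun j =>
    integrable_conv (integrable_K0 hκ) (hKiter j).1
  have hfcont : ∀ j, Continuous (f j) := fun j =>
    continuous_conv_K0 hκ (hKiter j).1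
  have hfval : ∀ j, (∫ ξ, f j ξ) = 0 := by
    intro j
    rw [hf]
    show (∫ ξ, conv (K0 κ) (Kiter α c κ j) ξ) = 0
    rw [integral_conv (integrable_K0 hκ) (hKiter j).1, (hKiter j).2.2, mul_zero]
  set u : ℕ → ℝ := fun j => 1 / (2 * κ) * r ^ (j + 1) with hu
  have hubound : ∀ j ξ, ‖f j ξ‖ ≤ u j := by
    intro j ξ
    rw [Real.norm_eq_abs]
    refine (abs_conv_K0_le hκ (hKiter j).1 ξ).trans ?_
    have h1 : (0:ℝ) ≤ 1 / (2 * κ) := by positivity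
    exact mul_le_mul_of_nonneg_left (hKiter j).2.1 h1
  have husum : Summable u := by
    refine Summable.mul_left _ ?_
    have := (summable_geometric_of_lt_one hr0 hK).mul_left r
    simpa [pow_succ'] using this
  have hl1 : ∀ j, (∫ ξ, ‖f j ξ‖) ≤ 1 / κ ^ 2 * r ^ (j + 1) := by
    intro j
    have h := l1_conv_le (integrable_K0 hκ) (hKiter j).1
    have hK0abs : (∫ ξ, |K0 κ ξ|) = 1 / κ ^ 2 := by
      rw [← integral_K0 hκ]
      congr 1
      funext ξ
      exact abs_of_nonneg (K0_nonneg hκ ξ)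
    simp_rw [Real.norm_eq_abs]
    refine h.trans ?_
    rw [hK0abs]
    refine mul_le_mul_of_nonneg_left (hKiter j).2.1 (by positivity)
  -- uniform convergence
  have hunif0 : TendstoUniformly
      (fun (N : ℕ) (ξ : ℝ) => ∑ j ∈ Finset.range N, f j ξ)
      (fun ξ => ∑' j, f j ξ) atTop := tendstoUniformly_tsum_nat husum hubound
  have hconstu : TendstoUniformly (fun (_ : ℕ) (ξ : ℝ) => K0 κ ξ) (K0 κ) atTop := by
    intro v hv
    filter_upwards with n ξ
    exact refl_mem_uniformity hv
  have hunif : TendstoUniformly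
      (fun (N : ℕ) (ξ : ℝ) => K0 κ ξ + ∑ j ∈ Finset.range N, f j ξ)
      (Gker α c κ) atTop := hconstu.add hunif0
  -- continuity
  have hcont : Continuous (Gker α c κ) := by
    refine hunif.continuous (Eventually.of_forall fun N => ?_).frequently
    exact (continuous_K0 κ).add (continuous_finset_sum _ fun j _ => hfcont j)
  -- pointwise summability
  have hsum_pt : ∀ ξ, Summable fun j => f j ξ := by
    intro ξ
    refine Summable.of_norm ?_
    exact Summable.of_nonneg_of_le (fun j => norm_nonneg _) (fun j => hubound j ξ) husum
  -- integrability of the tsum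
  have htcont : Continuous fun ξ => ∑' j, f j ξ := by
    have : (fun ξ => ∑' j, f j ξ) = fun ξ => Gker α c κ ξ - K0 κ ξ := by
      funext ξ; rw [Gker]; ring
    rw [this]
    exact hcont.sub (continuous_K0 κ)
  have htsum_int : Integrable (fun ξ => ∑' j, f j ξ) := by
    refine ⟨htcont.aestronglyMeasurable, ?_⟩
    rw [hasFiniteIntegral_iff_norm]
    have hptw : ∀ ξ : ℝ, ENNReal.ofReal ‖∑' j, f j ξ‖
        ≤ ∑' j, ENNReal.ofReal ‖f j ξ‖ := by
      intro ξ
      have h1 : ‖∑' j, f j ξ‖ ≤ ∑' j, ‖f j ξ‖ :=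
        norm_tsum_le_tsum_norm ((hsum_pt ξ).abs)
      refine (ENNReal.ofReal_le_ofReal h1).trans_eq ?_
      exact ENNReal.ofReal_tsum_of_nonneg (fun j => norm_nonneg _) ((hsum_pt ξ).abs)
    calc ∫⁻ ξ, ENNReal.ofReal ‖∑' j, f j ξ‖
        ≤ ∫⁻ ξ, ∑' j, ENNReal.ofReal ‖f j ξ‖ := lintegral_mono hptw
    _ = ∑' j, ∫⁻ ξ, ENNReal.ofReal ‖f j ξ‖ := by
        refine lintegral_tsum fun j => ?_
        exact ((hfcont j).measurable.norm.ennreal_ofReal).aemeasurable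
    _ ≤ ∑' j, ENNReal.ofReal (1 / κ ^ 2 * r ^ (j + 1)) := by
        refine ENNReal.tsum_le_tsum fun j => ?_
        rw [← ofReal_integral_eq_lintegral_ofReal (hfint j).norm
          (ae_of_all _ fun ξ => norm_nonneg _)]
        exact ENNReal.ofReal_le_ofReal (hl1 j)
    _ = ENNReal.ofReal (∑' j, 1 / κ ^ 2 * r ^ (j + 1)) := by
        refine (ENNReal.ofReal_tsum_of_nonneg (fun j => by positivity) ?_).symm
        refine Summable.mul_left _ ?_
        have := (summable_geometric_of_lt_one hr0 hK).mul_left r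
        simpa [pow_succ'] using this
    _ < ⊤ := ENNReal.ofReal_lt_top
  have hGint : Integrable (Gker α c κ) := by
    have : Gker α c κ = fun ξ => K0 κ ξ + ∑' j, f j ξ := rfl
    rw [this]
    exact (integrable_K0 hκ).add htsum_int
  refine ⟨hunif, hcont, hGint, ?_⟩
  have hval : (∫ ξ, Gker α c κ ξ) = (∫ ξ, K0 κ ξ) + ∫ ξ, ∑' j, f j ξ := by
    have : Gker α c κ = fun ξ => K0 κ ξ + ∑' j, f j ξ := rfl
    rw [this]
    exact integral_add (integrable_K0 hκ) htsum_int
  have htsum_val : (∫ ξ, ∑' j, f j ξ) = 0 := by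
    have hsummable : Summable fun j => ∫ ξ, ‖f j ξ‖ := by
      refine Summable.of_nonneg_of_le
        (fun j => integral_nonneg fun ξ => norm_nonneg _) hl1 ?_
      refine Summable.mul_left _ ?_
      have := (summable_geometric_of_lt_one hr0 hK).mul_left r
      simpa [pow_succ'] using this
    rw [← integral_tsum_of_summable_integral_norm hfint hsummable]
    simp [hfval]
  rw [hval, htsum_val, integral_K0 hκ, add_zero]
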